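/- Let μ be an ε-product probability measure on V = V₁×⋯×V_k, let S,T ⊆ [k], and let f ∈ L²(V_S,μ_S). Then ‖A_{S,T}f − A_{S,S∩T}f‖²_{L²(μ_T)} ≤ |S|·|T|·ε²·‖f‖²_{L²(μ_S)}, where A_{S,S∩T}f is regarded as a function on V_T through y ↦ A_{S,S∩T}f(y_{S∩T}). -/

import Mathlib

open Finset

namespace GLL

variable {k : ℕ} {V : Fin k → Type} [∀ i, Fintype (V i)] [∀ i, DecidableEq (V i)]

/-- Expectation of `f` with respect to the (finitely supported) measure `μ`. -/
def expect (μ f : (∀ i, V i) → ℝ) : ℝ := ∑ x, μ x * f x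

/-- `μ` is a probability measure. -/
def IsProb (μ : (∀ i, V i) → ℝ) : Prop := (∀ x, 0 ≤ μ x) ∧ ∑ x, μ x = 1

/-- The marginal `μ_S` evaluated at (the `S`-coordinates of) `x`. -/
def marg (μ : (∀ i, V i) → ℝ) (S : Finset (Fin k)) (x : ∀ i, V i) : ℝ :=
  ∑ z, if ∀ i ∈ S, z i = x i then μ z else 0

/-- The link (conditional) measure `μ_x` for `x ∈ V_S`, viewed as a measure on
full points agreeing with `x` on `S`. -/
noncomputable def cond (μ : (∀ i, V i) → ℝ) (S : Finset (Fin k)) (x z : ∀ i, V i) : ℝ :=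
  if ∀ i ∈ S, z i = x i then μ z / marg μ S x else 0

/-- The averaging operator `A_S`: `A_S f (x) = E_{y ∼ μ_{x_S}} [f(x_S, y)]`.
Applied to an `S'`-junta `f`, this is also the operator `A_{S',S}`. -/
noncomputable def Aop (μ : (∀ i, V i) → ℝ) (S : Finset (Fin k)) (f : (∀ i, V i) → ℝ)
    (x : ∀ i, V i) : ℝ :=
  ∑ z, cond μ S x z * f z

/-- The Efron–Stein component `f^{=S} = ∑_{T ⊆ S} (-1)^{|S∖T|} A_T f`. -/
noncomputable def ES (μ : (∀ i, V i) → ℝ) (S : Finset (Fin k)) (f : (∀ i, V i) → ℝ)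
    (x : ∀ i, V i) : ℝ :=
  ∑ T ∈ S.powerset, (-1 : ℝ) ^ (S.card - T.card) * Aop μ T f x

/-- The low-degree part `f^{≤ d} = ∑_{|S| ≤ d} f^{=S}`. -/
noncomputable def lowPart (μ : (∀ i, V i) → ℝ) (d : ℕ) (f : (∀ i, V i) → ℝ)
    (x : ∀ i, V i) : ℝ :=
  ∑ S ∈ univ.powerset.filter (fun S : Finset (Fin k) => S.card ≤ d), ES μ S f x

/-- The Laplacian `L_S[f] = ∑_{T ⊇ S} f^{=T}`. -/
noncomputable def Lap (μ : (∀ i, V i) → ℝ) (S : Finset (Fin k)) (f : (∀ i, V i) → ℝ)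
    (x : ∀ i, V i) : ℝ :=
  ∑ T ∈ univ.powerset.filter (fun T : Finset (Fin k) => S ⊆ T), ES μ T f x

/-- The truncated Laplacian `L_S^{≤d}[f] = ∑_{T ⊇ S, |T| ≤ d} f^{=T}`. -/
noncomputable def LapLe (μ : (∀ i, V i) → ℝ) (d : ℕ) (S : Finset (Fin k))
    (f : (∀ i, V i) → ℝ) (x : ∀ i, V i) : ℝ :=
  ∑ T ∈ univ.powerset.filter (fun T : Finset (Fin k) => S ⊆ T ∧ T.card ≤ d), ES μ T f x

/-- The influence `I_{S,x}[f] = ‖L_S[f](x,·)‖²_{L²(μ_x)}`. -/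
noncomputable def Inf (μ : (∀ i, V i) → ℝ) (S : Finset (Fin k)) (f : (∀ i, V i) → ℝ)
    (x : ∀ i, V i) : ℝ :=
  ∑ z, cond μ S x z * (Lap μ S f z) ^ 2

/-- The truncated influence `I^{≤d}_{S,x}[f] = ‖L_S^{≤d}[f](x,·)‖²_{L²(μ_x)}`. -/
noncomputable def InfLe (μ : (∀ i, V i) → ℝ) (d : ℕ) (S : Finset (Fin k))
    (f : (∀ i, V i) → ℝ) (x : ∀ i, V i) : ℝ :=
  ∑ z, cond μ S x z * (LapLe μ d S f z) ^ 2

/-- `‖f‖₂²` with respect to `μ`. -/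
def normSq (μ f : (∀ i, V i) → ℝ) : ℝ := ∑ x, μ x * (f x) ^ 2

/-- `‖f‖₄⁴` with respect to `μ`. -/
def norm4p4 (μ f : (∀ i, V i) → ℝ) : ℝ := ∑ x, μ x * (f x) ^ 4

/-- `‖f‖₂` with respect to `μ`. -/
noncomputable def l2norm (μ f : (∀ i, V i) → ℝ) : ℝ := Real.sqrt (normSq μ f)

/-- `‖f‖_∞`: the maximum of `|f|` over the support of `μ`. -/
noncomputable def supNorm (μ f : (∀ i, V i) → ℝ) : ℝ :=
  sSup ((fun x => |f x|) '' {x | 0 < μ x})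

/-- Inner product `⟨f, g⟩ = E_{x∼μ}[f(x) g(x)]`. -/
def inner' (μ f g : (∀ i, V i) → ℝ) : ℝ := ∑ x, μ x * (f x * g x)

/-- The pair `{i,j}`-skeleton of `μ` is `ε`-pseudorandom. -/
def PairPseudo (μ : (∀ i, V i) → ℝ) (ε : ℝ) (i j : Fin k) : Prop :=
  ∀ (f₁ : V i → ℝ) (f₂ : V j → ℝ),
    |expect μ (fun x => f₁ (x i) * f₂ (x j)) -
        expect μ (fun x => f₁ (x i)) * expect μ (fun x => f₂ (x j))| ≤
      ε * Real.sqrt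
        ((expect μ (fun x => f₁ (x i) ^ 2) - expect μ (fun x => f₁ (x i)) ^ 2) *
          (expect μ (fun x => f₂ (x j) ^ 2) - expect μ (fun x => f₂ (x j)) ^ 2))

/-- `μ` is an `ε`-product measure: every link of every restriction of size `≤ k - 2`
has `ε`-pseudorandom skeletons. -/
def EpsProduct (μ : (∀ i, V i) → ℝ) (ε : ℝ) : Prop :=
  ∀ S : Finset (Fin k), S.card ≤ k - 2 → ∀ x, 0 < marg μ S x →
    ∀ i j : Fin k, i ∉ S → j ∉ S → i ≠ j → PairPseudo (cond μ S x) ε i j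

/-- `‖f(x,·)‖_{L²(μ_x)}` for `x ∈ V_S`. -/
noncomputable def restrictNorm (μ : (∀ i, V i) → ℝ) (S : Finset (Fin k)) (x : ∀ i, V i)
    (f : (∀ i, V i) → ℝ) : ℝ :=
  Real.sqrt (∑ z, cond μ S x z * (f z) ^ 2)

/-- `f` is `(d, δ)`-global: all restrictions of at most `d` coordinates have
`2`-norm at most `δ`. -/
def IsGlobal (μ : (∀ i, V i) → ℝ) (d : ℕ) (δ : ℝ) (f : (∀ i, V i) → ℝ) : Prop :=
  ∀ S : Finset (Fin k), S.card ≤ d → ∀ x, 0 < marg μ S x → restrictNorm μ S x f ≤ δ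

/-- `f` is an `S`-junta: it depends only on the coordinates in `S`. -/
def Junta (S : Finset (Fin k)) (f : (∀ i, V i) → ℝ) : Prop :=
  ∀ x y, (∀ i ∈ S, x i = y i) → f x = f y

/-- The noise operator `T_ρ f = ∑_{S ⊆ [k]} ρ^{|S|} (1-ρ)^{k-|S|} A_S f`. -/
noncomputable def noiseOp (μ : (∀ i, V i) → ℝ) (ρ : ℝ) (f : (∀ i, V i) → ℝ)
    (x : ∀ i, V i) : ℝ :=
  ∑ S ∈ (univ : Finset (Fin k)).powerset, ρ ^ S.card * (1 - ρ) ^ (k - S.card) * Aop μ S f x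

/-- The up-down walk operator `T = (1/k) ∑_{i=1}^k A_{[k]∖{i}}`. -/
noncomputable def upDown (μ : (∀ i, V i) → ℝ) (f : (∀ i, V i) → ℝ) (x : ∀ i, V i) : ℝ :=
  (1 / (k : ℝ)) * ∑ i : Fin k, Aop μ (univ.erase i) f x

/-- The product measure `μ₁ ⊗ ⋯ ⊗ μ_k`. -/
def prodMeasure (μi : ∀ i, V i → ℝ) : (∀ i, V i) → ℝ := fun x => ∏ i, μi i (x i)

/-- `f` has degree at most `d`: `f^{=S} = 0` whenever `|S| > d`. -/
def DegLe (μ : (∀ i, V i) → ℝ) (d : ℕ) (f : (∀ i, V i) → ℝ) : Prop :=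
  ∀ S : Finset (Fin k), d < S.card → ∀ x, ES μ S f x = 0

/-- `{F S}_{S ⊆ [k]}` is an `(α, ε')`-approximate Efron–Stein decomposition of `f`. -/
noncomputable def ApproxES (μ : (∀ i, V i) → ℝ) (α ε' : ℝ) (f : (∀ i, V i) → ℝ)
    (F : Finset (Fin k) → (∀ i, V i) → ℝ) : Prop :=
  l2norm μ f ≤ α ∧
    l2norm μ (fun x => f x - ∑ S ∈ (univ : Finset (Fin k)).powerset, F S x) ≤ ε' ∧
    ∀ S : Finset (Fin k), ∃ h : (∀ i, V i) → ℝ,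
      l2norm μ h ≤ α ∧ l2norm μ (fun x => ES μ S h x - F S x) ≤ ε'

set_option linter.unusedSectionVars false

section Aux

variable {k : ℕ} {V : Fin k → Type} [∀ i, Fintype (V i)] [∀ i, DecidableEq (V i)]
variable {μ : (∀ i, V i) → ℝ} {S T R R' : Finset (Fin k)} {x y z w : ∀ i, V i} {ε : ℝ}

lemma marg_nonneg (hμ : ∀ y, 0 ≤ μ y) (S : Finset (Fin k)) (x : ∀ i, V i) :
    0 ≤ marg μ S x :=
  Finset.sum_nonneg fun z _ => by split_ifs; exacts [hμ z, le_rfl]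

lemma le_marg (hμ : ∀ y, 0 ≤ μ y) (S : Finset (Fin k)) (x : ∀ i, V i) :
    μ x ≤ marg μ S x := by
  have h : μ x = if ∀ i ∈ S, x i = x i then μ x else 0 := by simp
  rw [h, marg]
  exact Finset.single_le_sum (f := fun z => if ∀ i ∈ S, z i = x i then μ z else 0)
    (fun z _ => by split_ifs; exacts [hμ z, le_rfl]) (Finset.mem_univ x)

lemma marg_congr (h : ∀ i ∈ S, z i = x i) : marg μ S z = marg μ S x := by
  refine Finset.sum_congr rfl fun w _ => if_congr ?_ rfl rfl
  constructor <;> intro hw i hi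
  · exact (hw i hi).trans (h i hi)
  · exact (hw i hi).trans (h i hi).symm

lemma cond_congr (h : ∀ i ∈ S, z i = x i) : cond μ S z = cond μ S x := by
  funext z'
  rw [cond, cond, marg_congr h]
  refine if_congr ?_ rfl rfl
  constructor <;> intro hw i hi
  · exact (hw i hi).trans (h i hi)
  · exact (hw i hi).trans (h i hi).symm

lemma cond_nonneg (hμ : ∀ y, 0 ≤ μ y) (S : Finset (Fin k)) (x z : ∀ i, V i) :
    0 ≤ cond μ S x z := by
  rw [cond]; split_ifs
  · exact div_nonneg (hμ z) (marg_nonneg hμ S x)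
  · exact le_rfl

lemma sum_cond (hm : 0 < marg μ S x) : ∑ z, cond μ S x z = 1 := by
  have h : ∀ z, cond μ S x z
      = (if ∀ i ∈ S, z i = x i then μ z else 0) / marg μ S x := by
    intro z; rw [cond]; split_ifs <;> simp
  simp_rw [h, ← Finset.sum_div]
  rw [show (∑ z, if ∀ i ∈ S, z i = x i then μ z else 0) = marg μ S x from rfl,
    div_self hm.ne']

lemma isProb_cond (hμ : ∀ y, 0 ≤ μ y) (hm : 0 < marg μ S x) : IsProb (cond μ S x) :=
  ⟨cond_nonneg hμ S x, sum_cond hm⟩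

lemma marg_empty (hμ : IsProb μ) (x : ∀ i, V i) : marg μ ∅ x = 1 := by
  rw [marg]; simpa using hμ.2

lemma cond_empty (hμ : IsProb μ) (x : ∀ i, V i) : cond μ ∅ x = μ := by
  funext z; rw [cond, marg_empty hμ]; simp

lemma aop_empty (hμ : IsProb μ) (f : (∀ i, V i) → ℝ) (x : ∀ i, V i) :
    Aop μ ∅ f x = expect μ f := by
  rw [Aop, expect, cond_empty hμ]

lemma mu_mul_cond (hμ : ∀ y, 0 ≤ μ y) (R : Finset (Fin k)) (z : ∀ i, V i) :
    ∑ x, μ x * cond μ R x z = μ z := by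
  have h1 : ∀ x, μ x * cond μ R x z
      = (if ∀ i ∈ R, x i = z i then μ x else 0) * (μ z / marg μ R z) := by
    intro x
    rw [cond]
    by_cases h : ∀ i ∈ R, z i = x i
    · rw [if_pos h, if_pos (fun i hi => (h i hi).symm),
        marg_congr (fun i hi => (h i hi).symm)]
    · rw [if_neg h, if_neg (fun h' => h fun i hi => (h' i hi).symm), mul_zero, zero_mul]
  simp_rw [h1, ← Finset.sum_mul]
  rw [show (∑ x, if ∀ i ∈ R, x i = z i then μ x else 0) = marg μ R z from rfl]
  rcases (marg_nonneg hμ R z).eq_or_lt with h0 | h0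
  · have hz : μ z = 0 := le_antisymm (h0 ▸ le_marg hμ R z) (hμ z)
    simp [hz]
  · rw [mul_comm, div_mul_cancel₀ _ h0.ne']

lemma expect_aop (hμ : ∀ y, 0 ≤ μ y) (R : Finset (Fin k)) (g : (∀ i, V i) → ℝ) :
    expect μ (fun x => Aop μ R g x) = expect μ g := by
  simp only [expect, Aop, Finset.mul_sum]
  rw [Finset.sum_comm]
  refine Finset.sum_congr rfl fun z _ => ?_
  calc (∑ x, μ x * (cond μ R x z * g z)) = (∑ x, μ x * cond μ R x z) * g z := by
        rw [Finset.sum_mul]; exact Finset.sum_congr rfl fun x _ => by ring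
    _ = μ z * g z := by rw [mu_mul_cond hμ R z]

lemma normSq_nonneg (hμ : ∀ y, 0 ≤ μ y) (f : (∀ i, V i) → ℝ) : 0 ≤ normSq μ f :=
  Finset.sum_nonneg fun x _ => mul_nonneg (hμ x) (sq_nonneg _)

lemma decomp (hμ : ∀ y, 0 ≤ μ y) (R : Finset (Fin k)) (g : (∀ i, V i) → ℝ) :
    normSq μ g = ∑ x, μ x * normSq (cond μ R x) g := by
  have h := (expect_aop hμ R (fun z => g z ^ 2)).symm
  simpa [expect, normSq, Aop] using h

lemma normSq_congr {m g h : (∀ i, V i) → ℝ} (hm : ∀ y, 0 ≤ m y)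
    (hgh : ∀ z, 0 < m z → g z = h z) : normSq m g = normSq m h := by
  refine Finset.sum_congr rfl fun z _ => ?_
  rcases (hm z).eq_or_lt with h0 | h0
  · rw [← h0]; ring
  · rw [hgh z h0]

end Aux
section Aux2

variable {k : ℕ} {V : Fin k → Type} [∀ i, Fintype (V i)] [∀ i, DecidableEq (V i)]
variable {μ : (∀ i, V i) → ℝ} {S T R R' : Finset (Fin k)} {x y z w : ∀ i, V i} {ε : ℝ}

lemma adjoint (hμ : ∀ y, 0 ≤ μ y) (f g : (∀ i, V i) → ℝ) (hg : Junta T g) :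
    inner' μ (fun x => Aop μ T f x) g = inner' μ f g := by
  have step : ∀ x, μ x * (Aop μ T f x * g x)
      = ∑ z, μ x * cond μ T x z * (f z * g z) := by
    intro x
    rw [Aop, Finset.sum_mul, Finset.mul_sum]
    refine Finset.sum_congr rfl fun z _ => ?_
    rcases eq_or_ne (cond μ T x z) 0 with h | h
    · simp [h]
    · have hag : ∀ i ∈ T, z i = x i := by
        by_contra hc; rw [cond, if_neg hc] at h; exact h rfl
      rw [hg x z fun i hi => (hag i hi).symm]
      ring
  rw [inner']
  simp_rw [step]
  rw [Finset.sum_comm, inner']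
  refine Finset.sum_congr rfl fun z _ => ?_
  rw [← Finset.sum_mul, mu_mul_cond hμ T z]

lemma cond_cond (hm : 0 < marg μ R x) (hwR : ∀ i ∈ R, w i = x i)
    (hwR' : ∀ i ∈ R', w i = y i) :
    cond (cond μ R x) R' y = cond μ (R ∪ R') w := by
  have hiff : ∀ z' : ∀ i, V i, (∀ i ∈ R ∪ R', z' i = w i)
      ↔ ((∀ i ∈ R, z' i = x i) ∧ (∀ i ∈ R', z' i = y i)) := by
    intro z'; constructor
    · intro h
      exact ⟨fun i hi => (h i (Finset.mem_union_left _ hi)).trans (hwR i hi),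
             fun i hi => (h i (Finset.mem_union_right _ hi)).trans (hwR' i hi)⟩
    · rintro ⟨h1, h2⟩ i hi
      rcases Finset.mem_union.1 hi with hi | hi
      · exact (h1 i hi).trans (hwR i hi).symm
      · exact (h2 i hi).trans (hwR' i hi).symm
  have hmarg : marg (cond μ R x) R' y = marg μ (R ∪ R') w / marg μ R x := by
    have h : ∀ z : ∀ i, V i, (if ∀ i ∈ R', z i = y i then cond μ R x z else 0)
        = (if ∀ i ∈ R ∪ R', z i = w i then μ z else 0) / marg μ R x := by
      intro z
      rw [cond]
      by_cases h1 : ∀ i ∈ R', z i = y i <;> by_cases h2 : ∀ i ∈ R, z i = x i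
      · rw [if_pos h1, if_pos h2, if_pos ((hiff z).2 ⟨h2, h1⟩)]
      · rw [if_pos h1, if_neg h2, if_neg (fun h => h2 ((hiff z).1 h).1), zero_div]
      · rw [if_neg h1, if_neg (fun h => h1 ((hiff z).1 h).2), zero_div]
      · rw [if_neg h1, if_neg (fun h => h1 ((hiff z).1 h).2), zero_div]
    calc marg (cond μ R x) R' y
        = ∑ z, (if ∀ i ∈ R', z i = y i then cond μ R x z else 0) := rfl
      _ = ∑ z, (if ∀ i ∈ R ∪ R', z i = w i then μ z else 0) / marg μ R x := by
          simp_rw [h]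
      _ = marg μ (R ∪ R') w / marg μ R x := by rw [← Finset.sum_div]; rfl
  funext z'
  simp only [cond, hmarg]
  by_cases h1 : ∀ i ∈ R', z' i = y i <;> by_cases h2 : ∀ i ∈ R, z' i = x i
  · rw [if_pos h1, if_pos h2, if_pos ((hiff z').2 ⟨h2, h1⟩),
      div_div_div_cancel_right₀ hm.ne']
  · rw [if_pos h1, if_neg h2, if_neg (fun h => h2 ((hiff z').1 h).1), zero_div]
  · rw [if_neg h1, if_neg (fun h => h1 ((hiff z').1 h).2)]
  · rw [if_neg h1, if_neg (fun h => h1 ((hiff z').1 h).2)]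

lemma aop_cond (hm : 0 < marg μ R x) (hz : ∀ i ∈ R, z i = x i) (hRT : R ⊆ T)
    (f : (∀ i, V i) → ℝ) :
    Aop (cond μ R x) (T \ R) f z = Aop μ T f z := by
  rw [Aop, Aop]
  refine Finset.sum_congr rfl fun z' _ => ?_
  have h := cond_cond (R' := T \ R) (w := z) (y := z) hm hz (fun i _ => rfl)
  rw [h, Finset.union_sdiff_of_subset hRT]

lemma aop_cond_empty (hm : 0 < marg μ R x) (hz : ∀ i ∈ R, z i = x i)
    (f : (∀ i, V i) → ℝ) :
    Aop (cond μ R x) ∅ f z = Aop μ R f x := by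
  rw [Aop, Aop]
  refine Finset.sum_congr rfl fun z' _ => ?_
  have h := cond_cond (w := x) (y := z) (R' := (∅ : Finset (Fin k))) hm
    (fun i _ => rfl) (fun i hi => absurd hi (Finset.notMem_empty i))
  rw [h, Finset.union_empty]

lemma aop_congr {f : (∀ i, V i) → ℝ} (h : ∀ i ∈ T, x i = y i) :
    Aop μ T f x = Aop μ T f y := by
  simp only [Aop, cond_congr h]

lemma junta_aop (μ : (∀ i, V i) → ℝ) (T : Finset (Fin k)) (f : (∀ i, V i) → ℝ) :
    Junta T (fun x => Aop μ T f x) := fun _ _ h => aop_congr h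

lemma expect_const (hμ : IsProb μ) (c : ℝ) : expect μ (fun _ => c) = c := by
  rw [expect]
  simp_rw [mul_comm]
  rw [← Finset.mul_sum, hμ.2, mul_one]

lemma var_nonneg (hμ : IsProb μ) (g : (∀ i, V i) → ℝ) :
    0 ≤ expect μ (fun x => g x ^ 2) - expect μ g ^ 2 := by
  set c := expect μ g with hc
  have h0 : 0 ≤ expect μ (fun x => (g x - c) ^ 2) :=
    Finset.sum_nonneg fun xx _ => mul_nonneg (hμ.1 xx) (sq_nonneg _)
  have h1 : expect μ (fun x => (g x - c) ^ 2)
      = expect μ (fun x => g x ^ 2) - 2 * c * expect μ g + c ^ 2 := by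
    simp only [expect]
    have : ∀ x, μ x * (g x - c) ^ 2
        = μ x * g x ^ 2 - 2 * c * (μ x * g x) + c ^ 2 * μ x := by intro x; ring
    simp_rw [this, Finset.sum_add_distrib, Finset.sum_sub_distrib, ← Finset.mul_sum,
      hμ.2, mul_one]
  nlinarith [h0, h1]

end Aux2
section Aux3

variable {k : ℕ} {V : Fin k → Type} [∀ i, Fintype (V i)] [∀ i, DecidableEq (V i)]
variable {μ : (∀ i, V i) → ℝ} {S T R R' : Finset (Fin k)} {x y z w : ∀ i, V i} {ε : ℝ}

/-- The clean pseudorandomness property: every link is pseudorandom in every pair of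
free coordinates. -/
def EPstar (μ : (∀ i, V i) → ℝ) (ε : ℝ) : Prop :=
  ∀ R : Finset (Fin k), ∀ x : ∀ i, V i, 0 < marg μ R x →
    ∀ i j : Fin k, i ∉ R → j ∉ R → i ≠ j → PairPseudo (cond μ R x) ε i j

lemma epstar_of_epsProduct (hprod : EpsProduct μ ε) : EPstar μ ε := by
  intro R x hm i j hi hj hij
  have hsub : R ⊆ (Finset.univ.erase i).erase j := by
    intro a ha
    exact Finset.mem_erase.2 ⟨fun h => hj (h ▸ ha),
      Finset.mem_erase.2 ⟨fun h => hi (h ▸ ha), Finset.mem_univ a⟩⟩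
  have hcard : R.card ≤ k - 2 := by
    have h1 := Finset.card_le_card hsub
    have h2 : ((Finset.univ.erase i).erase j).card = k - 1 - 1 := by
      rw [Finset.card_erase_of_mem
          (Finset.mem_erase.2 ⟨hij.symm, Finset.mem_univ j⟩),
        Finset.card_erase_of_mem (Finset.mem_univ i)]
      simp
    omega
  exact hprod R hcard x hm i j hi hj hij

lemma pairPseudo_fixed_left (hε : 0 ≤ ε) {m : (∀ i, V i) → ℝ} (hm : IsProb m)
    (i j : Fin k) (a : V i) (hfix : ∀ z, 0 < m z → z i = a) :
    PairPseudo m ε i j := by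
  intro f₁ f₂
  have h1 : expect m (fun x => f₁ (x i) * f₂ (x j))
      = f₁ a * expect m (fun x => f₂ (x j)) := by
    rw [expect, expect, Finset.mul_sum]
    refine Finset.sum_congr rfl fun z _ => ?_
    rcases (hm.1 z).eq_or_lt with h0 | h0
    · rw [← h0]; ring
    · rw [hfix z h0]; ring
  have h2 : expect m (fun x => f₁ (x i)) = f₁ a := by
    have : expect m (fun x => f₁ (x i)) = f₁ a * ∑ z, m z := by
      rw [expect, Finset.mul_sum]
      refine Finset.sum_congr rfl fun z _ => ?_
      rcases (hm.1 z).eq_or_lt with h0 | h0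
      · rw [← h0]; ring
      · rw [hfix z h0]; ring
    rw [this, hm.2, mul_one]
  rw [h1, h2, sub_self, abs_zero]
  have hv1 : 0 ≤ expect m (fun x => f₁ (x i) ^ 2) - expect m (fun x => f₁ (x i)) ^ 2 :=
    var_nonneg hm _
  have hv2 : 0 ≤ expect m (fun x => f₂ (x j) ^ 2) - expect m (fun x => f₂ (x j)) ^ 2 :=
    var_nonneg hm _
  exact mul_nonneg hε (Real.sqrt_nonneg _)

lemma pairPseudo_fixed_right (hε : 0 ≤ ε) {m : (∀ i, V i) → ℝ} (hm : IsProb m)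
    (i j : Fin k) (a : V j) (hfix : ∀ z, 0 < m z → z j = a) :
    PairPseudo m ε i j := by
  intro f₁ f₂
  have h1 : expect m (fun x => f₁ (x i) * f₂ (x j))
      = f₂ a * expect m (fun x => f₁ (x i)) := by
    rw [expect, expect, Finset.mul_sum]
    refine Finset.sum_congr rfl fun z _ => ?_
    rcases (hm.1 z).eq_or_lt with h0 | h0
    · rw [← h0]; ring
    · rw [hfix z h0]; ring
  have h2 : expect m (fun x => f₂ (x j)) = f₂ a := by
    have : expect m (fun x => f₂ (x j)) = f₂ a * ∑ z, m z := by
      rw [expect, Finset.mul_sum]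
      refine Finset.sum_congr rfl fun z _ => ?_
      rcases (hm.1 z).eq_or_lt with h0 | h0
      · rw [← h0]; ring
      · rw [hfix z h0]; ring
    rw [this, hm.2, mul_one]
  rw [h1, h2]
  rw [show f₂ a * expect m (fun x => f₁ (x i))
      - expect m (fun x => f₁ (x i)) * f₂ a = 0 by ring, abs_zero]
  exact mul_nonneg hε (Real.sqrt_nonneg _)

lemma epstar_cond (hε : 0 ≤ ε) (hμ : IsProb μ) (hEP : EPstar μ ε)
    (hm : 0 < marg μ R x) : EPstar (cond μ R x) ε := by
  intro R' y hm' i j hi hj hij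
  -- find a support point
  have hsum : (∑ z, if ∀ l ∈ R', z l = y l then cond μ R x z else 0) ≠ 0 := by
    rw [show (∑ z, if ∀ l ∈ R', z l = y l then cond μ R x z else 0)
        = marg (cond μ R x) R' y from rfl]
    exact hm'.ne'
  obtain ⟨z₀, -, hz₀⟩ := Finset.exists_ne_zero_of_sum_ne_zero hsum
  have hy : ∀ l ∈ R', z₀ l = y l := by
    by_contra hc; rw [if_neg hc] at hz₀; exact hz₀ rfl
  rw [if_pos hy] at hz₀
  have hx : ∀ l ∈ R, z₀ l = x l := by
    by_contra hc; rw [cond, if_neg hc] at hz₀; exact hz₀ rfl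
  have hz₀pos : 0 < μ z₀ := by
    rcases (hμ.1 z₀).eq_or_lt with h0 | h0
    · exfalso; apply hz₀; rw [cond, if_pos hx, ← h0, zero_div]
    · exact h0
  have hcc : cond (cond μ R x) R' y = cond μ (R ∪ R') z₀ :=
    cond_cond hm hx hy
  have hmU : 0 < marg μ (R ∪ R') z₀ := lt_of_lt_of_le hz₀pos (le_marg hμ.1 _ _)
  rw [hcc]
  by_cases hiRU : i ∈ R ∪ R'
  · refine pairPseudo_fixed_left hε (isProb_cond hμ.1 hmU) i j (z₀ i) ?_
    intro z hz
    have : ∀ l ∈ R ∪ R', z l = z₀ l := by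
      by_contra hc; rw [cond, if_neg hc] at hz; exact lt_irrefl _ hz
    exact this i hiRU
  · by_cases hjRU : j ∈ R ∪ R'
    · refine pairPseudo_fixed_right hε (isProb_cond hμ.1 hmU) i j (z₀ j) ?_
      intro z hz
      have : ∀ l ∈ R ∪ R', z l = z₀ l := by
        by_contra hc; rw [cond, if_neg hc] at hz; exact lt_irrefl _ hz
      exact this j hjRU
    · exact hEP (R ∪ R') z₀ hmU i j hiRU hjRU hij

/-- Cauchy–Schwarz for `inner'`. -/
lemma inner_sq_le (hμ : ∀ y, 0 ≤ μ y) (f g : (∀ i, V i) → ℝ) :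
    inner' μ f g ^ 2 ≤ normSq μ f * normSq μ g := by
  have h := Finset.sum_mul_sq_le_sq_mul_sq Finset.univ
    (fun x => Real.sqrt (μ x) * f x) (fun x => Real.sqrt (μ x) * g x)
  have e1 : ∀ x : ∀ i, V i, (Real.sqrt (μ x) * f x) * (Real.sqrt (μ x) * g x)
      = μ x * (f x * g x) := by
    intro x
    rw [show (Real.sqrt (μ x) * f x) * (Real.sqrt (μ x) * g x)
        = (Real.sqrt (μ x) * Real.sqrt (μ x)) * (f x * g x) by ring,
      Real.mul_self_sqrt (hμ x)]
  have e2 : ∀ x : ∀ i, V i, (Real.sqrt (μ x) * f x) ^ 2 = μ x * f x ^ 2 := by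
    intro x
    rw [mul_pow, Real.sq_sqrt (hμ x)]
  have e3 : ∀ x : ∀ i, V i, (Real.sqrt (μ x) * g x) ^ 2 = μ x * g x ^ 2 := by
    intro x
    rw [mul_pow, Real.sq_sqrt (hμ x)]
  simp_rw [e1, e2, e3] at h
  exact h

lemma sq_cancel {a K : ℝ} (ha : 0 ≤ a) (hK : 0 ≤ K) (h : a * a ≤ K * a) : a ≤ K := by
  rcases ha.eq_or_lt with h0 | h0
  · rw [← h0]; exact hK
  · exact le_of_mul_le_mul_right (by linarith) h0

end Aux3
section Aux4

variable {k : ℕ} {V : Fin k → Type} [∀ i, Fintype (V i)] [∀ i, DecidableEq (V i)]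
variable {μ : (∀ i, V i) → ℝ} {S T R R' : Finset (Fin k)} {x y z w : ∀ i, V i} {ε : ℝ}

lemma inner'_comm (μ f g : (∀ i, V i) → ℝ) : inner' μ f g = inner' μ g f := by
  simp only [inner']
  exact Finset.sum_congr rfl fun x _ => by ring

lemma expect_sub (μ g h : (∀ i, V i) → ℝ) :
    expect μ (fun x => g x - h x) = expect μ g - expect μ h := by
  simp only [expect, mul_sub, Finset.sum_sub_distrib]

lemma expect_aop_sub (hμ : IsProb μ) (T : Finset (Fin k)) (f : (∀ i, V i) → ℝ) :
    expect μ (fun z => Aop μ T f z - Aop μ ∅ f z) = 0 := by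
  rw [expect_sub]
  rw [show expect μ (fun z => Aop μ T f z) = expect μ f from expect_aop hμ.1 T f,
    show expect μ (fun z => Aop μ ∅ f z) = expect μ f from expect_aop hμ.1 ∅ f, sub_self]

lemma normSq_add_const {m : (∀ i, V i) → ℝ} (hm : IsProb m) (X : (∀ i, V i) → ℝ)
    (hEX : expect m X = 0) (Y : ℝ) :
    normSq m (fun z => X z + Y) = normSq m X + Y ^ 2 := by
  simp only [normSq]
  have h : ∀ z : ∀ i, V i, m z * (X z + Y) ^ 2
      = m z * X z ^ 2 + 2 * Y * (m z * X z) + Y ^ 2 * m z := fun z => by ring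
  simp_rw [h, Finset.sum_add_distrib, ← Finset.mul_sum]
  rw [show (∑ z, m z * X z) = expect m X from rfl, hEX, hm.2]
  ring

lemma expect_aop_sub_c (hμ : IsProb μ) (T : Finset (Fin k)) (f : (∀ i, V i) → ℝ) :
    expect μ (fun z => Aop μ T f z - expect μ f) = 0 := by
  have h := expect_aop_sub hμ T f
  have he : (fun z => Aop μ T f z - Aop μ ∅ f z) = fun z => Aop μ T f z - expect μ f :=
    funext fun z => by rw [aop_empty hμ]
  rwa [he] at h

lemma normSq_eq_inner (hμ : IsProb μ) (T : Finset (Fin k)) (f : (∀ i, V i) → ℝ) :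
    normSq μ (fun x => Aop μ T f x - expect μ f)
      = inner' μ f (fun x => Aop μ T f x - expect μ f) := by
  have hμ0 := hμ.1
  set c := expect μ f with hc
  set g : (∀ i, V i) → ℝ := fun x => Aop μ T f x - c with hg
  have hjg : Junta T g := by
    intro a b h
    simp only [hg]
    rw [aop_congr (f := f) (μ := μ) h]
  have hEg : expect μ g = 0 := expect_aop_sub_c hμ T f
  calc normSq μ g = inner' μ g g := by
        simp only [normSq, inner', pow_two]
    _ = inner' μ (fun x => Aop μ T f x) g - (∑ x, μ x * (c * g x)) := by
        simp only [inner', ← Finset.sum_sub_distrib]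
        refine Finset.sum_congr rfl fun a _ => ?_
        simp only [hg]; ring
    _ = inner' μ f g - c * expect μ g := by
        rw [adjoint hμ0 f g hjg]
        congr 1
        rw [expect, Finset.mul_sum]
        exact Finset.sum_congr rfl fun a _ => by ring
    _ = inner' μ f g := by rw [hEg, mul_zero, sub_zero]

end Aux4
section Core

variable {k : ℕ} {V : Fin k → Type} [∀ i, Fintype (V i)] [∀ i, DecidableEq (V i)]
variable {ε : ℝ}

lemma core (hε : 0 ≤ ε) :
    ∀ n : ℕ, ∀ μ : (∀ i, V i) → ℝ, IsProb μ → EPstar μ ε →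
    ∀ S T : Finset (Fin k), ∀ f : (∀ i, V i) → ℝ, Junta S f → Disjoint S T →
    2 * (S.card + T.card) + (if T.card < S.card then 1 else 0) ≤ n →
    normSq μ (fun x => Aop μ T f x - Aop μ ∅ f x)
      ≤ (S.card : ℝ) * T.card * ε ^ 2 * normSq μ f := by
  intro n
  induction n using Nat.strong_induction_on with
  | _ n IH =>
  intro μ hμ hEP S T f hf hdisj hn
  have hμ0 := hμ.1
  have hNf : 0 ≤ normSq μ f := normSq_nonneg hμ0 f
  have hRHS : 0 ≤ (S.card : ℝ) * T.card * ε ^ 2 * normSq μ f :=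
    mul_nonneg (mul_nonneg (mul_nonneg (Nat.cast_nonneg _) (Nat.cast_nonneg _))
      (sq_nonneg ε)) hNf
  rcases T.eq_empty_or_nonempty with rfl | hTne
  · -- T = ∅
    have h0 : normSq μ (fun x => Aop μ ∅ f x - Aop μ ∅ f x) = 0 := by
      simp [normSq]
    rw [h0]; exact hRHS
  rcases S.eq_empty_or_nonempty with rfl | hSne
  · -- S = ∅ : f is constant
    have hconst : ∀ a b, f a = f b := fun a b =>
      hf a b fun i hi => absurd hi (Finset.notMem_empty i)
    have h0 : normSq μ (fun x => Aop μ T f x - Aop μ ∅ f x) = 0 := by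
      rw [normSq]
      refine Finset.sum_eq_zero fun x _ => ?_
      rcases (hμ0 x).eq_or_lt with h0 | h0
      · rw [← h0]; ring
      · have hmT : 0 < marg μ T x := lt_of_lt_of_le h0 (le_marg hμ0 T x)
        have h1 : Aop μ T f x = f x := by
          rw [Aop]
          calc ∑ z, cond μ T x z * f z = ∑ z, cond μ T x z * f x :=
                Finset.sum_congr rfl fun z _ => by rw [hconst z x]
            _ = f x := by rw [← Finset.sum_mul, sum_cond hmT, one_mul]
        have h2 : Aop μ ∅ f x = f x := by
          rw [aop_empty hμ, expect]
          calc ∑ z, μ z * f z = ∑ z, μ z * f x :=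
                Finset.sum_congr rfl fun z _ => by rw [hconst z x]
            _ = f x := by rw [← Finset.sum_mul, hμ.2, one_mul]
        rw [h1, h2]; ring
    rw [h0]; exact hRHS
  have hS1 : 1 ≤ S.card := Finset.one_le_card.2 hSne
  have hT1 : 1 ≤ T.card := Finset.one_le_card.2 hTne
  rcases eq_or_lt_of_le hT1 with hT1' | hT2
  · -- |T| = 1
    obtain ⟨j, rfl⟩ := Finset.card_eq_one.1 hT1'.symm
    have hjS : j ∉ S := fun h => (Finset.disjoint_left.1 hdisj h) (Finset.mem_singleton_self j)
    set c := expect μ f with hc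
    have hgf : (fun x => Aop μ ({j} : Finset (Fin k)) f x - Aop μ ∅ f x)
        = fun x => Aop μ ({j} : Finset (Fin k)) f x - c :=
      funext fun x => by rw [aop_empty hμ]
    rw [hgf]
    set g : (∀ i, V i) → ℝ := fun x => Aop μ ({j} : Finset (Fin k)) f x - c with hg
    have hkey : normSq μ g = inner' μ f g := normSq_eq_inner hμ {j} f
    have hEg : expect μ g = 0 := expect_aop_sub_c hμ {j} f
    have hjg : Junta ({j} : Finset (Fin k)) g := by
      intro a b h
      simp only [hg]
      rw [aop_congr (f := f) (μ := μ) h]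
    have hNg : 0 ≤ normSq μ g := normSq_nonneg hμ0 g
    simp only [Finset.card_singleton] at hn ⊢
    rcases eq_or_lt_of_le hS1 with hS1' | hS2
    · -- |S| = 1 : base case
      obtain ⟨i, rfl⟩ := Finset.card_eq_one.1 hS1'.symm
      have hij : i ≠ j := fun h =>
        hjS (h ▸ Finset.mem_singleton_self i)
      rcases isEmpty_or_nonempty (∀ i, V i) with he | hne
      · exfalso
        have h2 := hμ.2
        rw [Finset.univ_eq_empty, Finset.sum_empty] at h2
        norm_num at h2
      obtain ⟨x₀⟩ := hne
      have hpp := hEP ∅ x₀ (by rw [marg_empty hμ]; norm_num) i j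
        (Finset.notMem_empty i) (Finset.notMem_empty j) hij
      rw [cond_empty hμ] at hpp
      set f₁ : V i → ℝ := fun a => f (Function.update x₀ i a) with hf₁def
      set g₁ : V j → ℝ := fun b => g (Function.update x₀ j b) with hg₁def
      have hf₁ : ∀ x : ∀ l, V l, f₁ (x i) = f x := by
        intro x
        refine (hf x (Function.update x₀ i (x i)) fun l hl => ?_).symm
        rw [Finset.mem_singleton] at hl
        subst hl
        rw [Function.update_self]
      have hg₁ : ∀ x : ∀ l, V l, g₁ (x j) = g x := by
        intro x
        refine (hjg x (Function.update x₀ j (x j)) fun l hl => ?_).symm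
        rw [Finset.mem_singleton] at hl
        subst hl
        rw [Function.update_self]
      have hpair := hpp f₁ g₁
      have e₁ : expect μ (fun x => f₁ (x i) * g₁ (x j)) = inner' μ f g := by
        rw [expect, inner']
        exact Finset.sum_congr rfl fun x _ => by rw [hf₁ x, hg₁ x]
      have e₂ : expect μ (fun x => f₁ (x i)) = c := by
        rw [hc, expect, expect]
        exact Finset.sum_congr rfl fun x _ => by rw [hf₁ x]
      have e₃ : expect μ (fun x => g₁ (x j)) = 0 := by
        rw [← hEg, expect, expect]
        exact Finset.sum_congr rfl fun x _ => by rw [hg₁ x]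
      have e₄ : expect μ (fun x => f₁ (x i) ^ 2) = normSq μ f := by
        rw [expect, normSq]
        exact Finset.sum_congr rfl fun x _ => by rw [hf₁ x]
      have e₅ : expect μ (fun x => g₁ (x j) ^ 2) = normSq μ g := by
        rw [expect, normSq]
        exact Finset.sum_congr rfl fun x _ => by rw [hg₁ x]
      rw [e₁, e₂, e₃, e₄, e₅, mul_zero, sub_zero] at hpair
      have hb1 : (normSq μ f - c ^ 2) * (normSq μ g - 0 ^ 2)
          ≤ normSq μ f * normSq μ g := by
        have h1 : normSq μ f - c ^ 2 ≤ normSq μ f := by nlinarith [sq_nonneg c]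
        nlinarith [sq_nonneg c, hNg]
      have hstep : normSq μ g ≤ ε * Real.sqrt (normSq μ f * normSq μ g) := by
        calc normSq μ g = inner' μ f g := hkey
          _ ≤ |inner' μ f g| := le_abs_self _
          _ ≤ ε * Real.sqrt ((normSq μ f - c ^ 2) * (normSq μ g - 0 ^ 2)) := hpair
          _ ≤ ε * Real.sqrt (normSq μ f * normSq μ g) :=
              mul_le_mul_of_nonneg_left (Real.sqrt_le_sqrt hb1) hε
      have hfin : normSq μ g ≤ ε ^ 2 * normSq μ f := by
        have hK : 0 ≤ ε ^ 2 * normSq μ f := mul_nonneg (sq_nonneg _) hNf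
        refine sq_cancel hNg hK ?_
        have h2 : normSq μ g * normSq μ g
            ≤ (ε * Real.sqrt (normSq μ f * normSq μ g))
              * (ε * Real.sqrt (normSq μ f * normSq μ g)) :=
          mul_le_mul hstep hstep hNg
            (le_trans hNg hstep)
        calc normSq μ g * normSq μ g
            ≤ (ε * Real.sqrt (normSq μ f * normSq μ g))
              * (ε * Real.sqrt (normSq μ f * normSq μ g)) := h2
          _ = ε ^ 2 * (Real.sqrt (normSq μ f * normSq μ g)
              * Real.sqrt (normSq μ f * normSq μ g)) := by ring
          _ = ε ^ 2 * (normSq μ f * normSq μ g) := by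
              rw [Real.mul_self_sqrt (mul_nonneg hNf hNg)]
          _ = ε ^ 2 * normSq μ f * normSq μ g := by ring
      simp only [Finset.card_singleton]
      push_cast
      linarith [hfin]
    · -- |T| = 1, 2 ≤ |S| : duality
      have hmeas : 2 * (1 + S.card) < n := by
        rw [if_pos (by omega : 1 < S.card)] at hn
        omega
      have hIH := IH (2 * (1 + S.card)) hmeas μ hμ hEP {j} S g hjg hdisj.symm
        (by simp only [Finset.card_singleton]; rw [if_neg (by omega : ¬ S.card < 1)]; omega)
      simp only [Finset.card_singleton, Nat.cast_one] at hIH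
      set h : (∀ i, V i) → ℝ := fun x => Aop μ S g x - Aop μ ∅ g x with hh
      have hinner : inner' μ f g = inner' μ f h := by
        have h1 : inner' μ f h
            = inner' μ f (fun x => Aop μ S g x) - ∑ x, μ x * (f x * Aop μ ∅ g x) := by
          simp only [inner', hh, ← Finset.sum_sub_distrib]
          exact Finset.sum_congr rfl fun x _ => by ring
        have h2 : ∑ x, μ x * (f x * Aop μ ∅ g x) = 0 := by
          refine Finset.sum_eq_zero fun x _ => ?_
          rw [aop_empty hμ, hEg, mul_zero, mul_zero]
        have h3 : inner' μ f (fun x => Aop μ S g x) = inner' μ f g := by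
          rw [inner'_comm, adjoint hμ0 g f hf, inner'_comm]
        rw [h1, h2, h3, sub_zero]
      have hNh : 0 ≤ normSq μ h := normSq_nonneg hμ0 h
      have hCS : inner' μ f h ^ 2 ≤ normSq μ f * normSq μ h := inner_sq_le hμ0 f h
      have hfin : normSq μ g ≤ (S.card : ℝ) * ε ^ 2 * normSq μ f := by
        have hK : 0 ≤ (S.card : ℝ) * ε ^ 2 * normSq μ f :=
          mul_nonneg (mul_nonneg (Nat.cast_nonneg _) (sq_nonneg _)) hNf
        refine sq_cancel hNg hK ?_
        calc normSq μ g * normSq μ g = inner' μ f h ^ 2 := by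
              rw [hkey, hinner]; ring
          _ ≤ normSq μ f * normSq μ h := hCS
          _ ≤ normSq μ f * (1 * S.card * ε ^ 2 * normSq μ g) := by
              refine mul_le_mul_of_nonneg_left ?_ hNf
              exact hIH
          _ = (S.card : ℝ) * ε ^ 2 * normSq μ f * normSq μ g := by ring
      push_cast
      linarith [hfin]
  · -- 2 ≤ |T| : conditioning on one coordinate of T
    obtain ⟨j, hjT⟩ := hTne
    have hjS : j ∉ S := Finset.disjoint_right.1 hdisj hjT
    set T' := T.erase j with hT'def
    have hcardT' : T'.card = T.card - 1 := Finset.card_erase_of_mem hjT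
    set c := expect μ f with hc
    have hgf : (fun x => Aop μ T f x - Aop μ ∅ f x) = fun x => Aop μ T f x - c :=
      funext fun x => by rw [aop_empty hμ]
    rw [hgf]
    have hn' : 0 < n := by omega
    -- second IH : the singleton bound
    have hIH2 := IH (n - 1) (by omega) μ hμ hEP S {j} f hf
      (Finset.disjoint_singleton_right.2 hjS)
      (by
        have hite : (if ({j} : Finset (Fin k)).card < S.card then 1 else 0) ≤ 1 := by
          split <;> omega
        simp only [Finset.card_singleton] at hite ⊢
        omega)
    rw [show (fun x => Aop μ ({j} : Finset (Fin k)) f x - Aop μ ∅ f x)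
        = fun x => Aop μ ({j} : Finset (Fin k)) f x - c from
      funext fun x => by rw [aop_empty hμ]] at hIH2
    simp only [Finset.card_singleton, Nat.cast_one] at hIH2
    -- decompose along coordinate j
    rw [decomp hμ0 {j} (fun x => Aop μ T f x - c)]
    have hterm : ∀ x : ∀ i, V i,
        μ x * normSq (cond μ {j} x) (fun z => Aop μ T f z - c)
        ≤ μ x * ((S.card : ℝ) * T'.card * ε ^ 2 * normSq (cond μ {j} x) f
            + (Aop μ ({j} : Finset (Fin k)) f x - c) ^ 2) := by
      intro x
      rcases (hμ0 x).eq_or_lt with h0 | h0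
      · rw [← h0, zero_mul, zero_mul]
      refine mul_le_mul_of_nonneg_left ?_ h0.le
      have hmj : 0 < marg μ ({j} : Finset (Fin k)) x :=
        lt_of_lt_of_le h0 (le_marg hμ0 _ _)
      have hνP : IsProb (cond μ ({j} : Finset (Fin k)) x) := isProb_cond hμ0 hmj
      have hνEP : EPstar (cond μ ({j} : Finset (Fin k)) x) ε := epstar_cond hε hμ hEP hmj
      set ν := cond μ ({j} : Finset (Fin k)) x with hν
      have hre : normSq ν (fun z => Aop μ T f z - c)
          = normSq ν (fun z => (Aop ν T' f z - Aop ν ∅ f z)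
              + (Aop μ ({j} : Finset (Fin k)) f x - c)) := by
        refine normSq_congr (cond_nonneg hμ0 _ _) fun z hz => ?_
        have hzx : ∀ l ∈ ({j} : Finset (Fin k)), z l = x l := by
          by_contra hcc
          rw [hν, cond, if_neg hcc] at hz
          exact lt_irrefl _ hz
        have h1 : Aop ν (T \ {j}) f z = Aop μ T f z :=
          aop_cond hmj hzx (Finset.singleton_subset_iff.2 hjT) f
        have hTd : T \ {j} = T' := by
          rw [hT'def, Finset.sdiff_singleton_eq_erase]
        have h2 : Aop ν ∅ f z = Aop μ ({j} : Finset (Fin k)) f x :=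
          aop_cond_empty hmj hzx f
        rw [← h1, hTd, h2]
        ring
      rw [hre, normSq_add_const hνP _ (expect_aop_sub hνP T' f)]
      have hIH1 := IH (n - 1) (by omega) ν hνP hνEP S T' f hf
        (hdisj.mono_right (Finset.erase_subset j T))
        (by
          have hite : (if T'.card < S.card then 1 else 0) ≤ 1 := by
            split <;> omega
          omega)
      linarith [hIH1]
    calc ∑ x, μ x * normSq (cond μ {j} x) (fun z => Aop μ T f z - c)
        ≤ ∑ x, μ x * ((S.card : ℝ) * T'.card * ε ^ 2 * normSq (cond μ {j} x) f
            + (Aop μ ({j} : Finset (Fin k)) f x - c) ^ 2) :=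
          Finset.sum_le_sum fun x _ => hterm x
      _ = (S.card : ℝ) * T'.card * ε ^ 2 * normSq μ f
          + normSq μ (fun x => Aop μ ({j} : Finset (Fin k)) f x - c) := by
          simp only [mul_add, Finset.sum_add_distrib]
          congr 1
          rw [decomp hμ0 {j} f, Finset.mul_sum]
          exact Finset.sum_congr rfl fun x _ => by ring
      _ ≤ (S.card : ℝ) * T'.card * ε ^ 2 * normSq μ f
          + (S.card : ℝ) * 1 * ε ^ 2 * normSq μ f := by
          have := hIH2
          push_cast at this
          linarith [this]
      _ = (S.card : ℝ) * T.card * ε ^ 2 * normSq μ f := by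
          have hcast : (T'.card : ℝ) = (T.card : ℝ) - 1 := by
            rw [hcardT', Nat.cast_sub (by omega : 1 ≤ T.card)]
            norm_num
          rw [hcast]
          ring

end Core
theorem statement10 (k : ℕ) (hk : 1 ≤ k)
    (V : Fin k → Type) [∀ i, Fintype (V i)] [∀ i, DecidableEq (V i)]
    (μ : (∀ i, V i) → ℝ) (ε : ℝ) (hε : 0 ≤ ε) (hμ : IsProb μ) (hprod : EpsProduct μ ε)
    (S T : Finset (Fin k)) (f : (∀ i, V i) → ℝ) (hf : Junta S f) :
    normSq μ (fun x => Aop μ T f x - Aop μ (S ∩ T) f x) ≤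
      (S.card : ℝ) * T.card * ε ^ 2 * normSq μ f := by
  have hEP : EPstar μ ε := epstar_of_epsProduct hprod
  have hμ0 := hμ.1
  rw [decomp hμ0 (S ∩ T) (fun x => Aop μ T f x - Aop μ (S ∩ T) f x)]
  have hterm : ∀ x : ∀ i, V i,
      μ x * normSq (cond μ (S ∩ T) x) (fun z => Aop μ T f z - Aop μ (S ∩ T) f z)
      ≤ μ x * ((S.card : ℝ) * T.card * ε ^ 2 * normSq (cond μ (S ∩ T) x) f) := by
    intro x
    rcases (hμ0 x).eq_or_lt with h0 | h0
    · rw [← h0, zero_mul, zero_mul]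
    refine mul_le_mul_of_nonneg_left ?_ h0.le
    have hm : 0 < marg μ (S ∩ T) x := lt_of_lt_of_le h0 (le_marg hμ0 _ _)
    have hνP : IsProb (cond μ (S ∩ T) x) := isProb_cond hμ0 hm
    have hνEP : EPstar (cond μ (S ∩ T) x) ε := epstar_cond hε hμ hEP hm
    set ν := cond μ (S ∩ T) x with hν
    have hre : normSq ν (fun z => Aop μ T f z - Aop μ (S ∩ T) f z)
        = normSq ν (fun z => Aop ν (T \ (S ∩ T)) f z - Aop ν ∅ f z) := by
      refine normSq_congr (cond_nonneg hμ0 _ _) fun z hz => ?_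
      have hzx : ∀ l ∈ S ∩ T, z l = x l := by
        by_contra hcc
        rw [hν, cond, if_neg hcc] at hz
        exact lt_irrefl _ hz
      have h1 : Aop ν (T \ (S ∩ T)) f z = Aop μ T f z :=
        aop_cond hm hzx Finset.inter_subset_right f
      have h2 : Aop ν ∅ f z = Aop μ (S ∩ T) f x := aop_cond_empty hm hzx f
      have h3 : Aop μ (S ∩ T) f z = Aop μ (S ∩ T) f x := aop_congr hzx
      rw [h1, h2, h3]
    rw [hre]
    have hdisj : Disjoint S (T \ (S ∩ T)) := by
      refine Finset.disjoint_left.2 fun a haS haT => ?_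
      rcases Finset.mem_sdiff.1 haT with ⟨haT', haR⟩
      exact haR (Finset.mem_inter.2 ⟨haS, haT'⟩)
    have hcore := core hε
      (2 * (S.card + (T \ (S ∩ T)).card)
        + (if (T \ (S ∩ T)).card < S.card then 1 else 0))
      ν hνP hνEP S (T \ (S ∩ T)) f hf hdisj le_rfl
    have hNνf : 0 ≤ normSq ν f := normSq_nonneg hνP.1 f
    have hcard : ((T \ (S ∩ T)).card : ℝ) ≤ (T.card : ℝ) := by
      exact_mod_cast Finset.card_le_card (Finset.sdiff_subset)
    calc normSq ν (fun z => Aop ν (T \ (S ∩ T)) f z - Aop ν ∅ f z)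
        ≤ (S.card : ℝ) * (T \ (S ∩ T)).card * ε ^ 2 * normSq ν f := hcore
      _ ≤ (S.card : ℝ) * T.card * ε ^ 2 * normSq ν f := by
          refine mul_le_mul_of_nonneg_right ?_ hNνf
          refine mul_le_mul_of_nonneg_right ?_ (sq_nonneg ε)
          exact mul_le_mul_of_nonneg_left hcard (Nat.cast_nonneg _)
  calc ∑ x, μ x * normSq (cond μ (S ∩ T) x) (fun z => Aop μ T f z - Aop μ (S ∩ T) f z)
      ≤ ∑ x, μ x * ((S.card : ℝ) * T.card * ε ^ 2 * normSq (cond μ (S ∩ T) x) f) :=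
        Finset.sum_le_sum fun x _ => hterm x
    _ = (S.card : ℝ) * T.card * ε ^ 2 * normSq μ f := by
        rw [decomp hμ0 (S ∩ T) f, Finset.mul_sum]
        exact Finset.sum_congr rfl fun x _ => by ring

end GLL
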